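/- Equivalence of the two source terms (Remark A.2). Let φ be smooth with g > 0 and g̊ > 0 everywhere, and let S₀ and S̃₀ be the two source expressions defined below. Then, as an unconditional pointwise identity, S̃₀ − S₀ = −((g̊ − 1)/√g)·[ ∂_u(∂_ūφ·g^{−1/2}) + ∂_ū((∂_uφ + Ψ'(u) − (Ψ'(u))²·∂_ūφ)·g^{−1/2}) ]. In particular, S̃₀ = S₀ at every point whenever φ satisfies the Euler–Lagrange equation ∂_u(∂_ūφ·g^{−1/2}) + ∂_ū((∂_uφ + Ψ'(u) − (Ψ'(u))²·∂_ūφ)·g^{−1/2}) = 0. -/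

import Mathlib

noncomputable section

/-- partial derivative in the first variable (`∂_u`) -/
def pd1 (f : ℝ × ℝ → ℝ) (p : ℝ × ℝ) : ℝ := deriv (fun s => f (s, p.2)) p.1

/-- partial derivative in the second variable (`∂_ū`) -/
def pd2 (f : ℝ × ℝ → ℝ) (p : ℝ × ℝ) : ℝ := deriv (fun s => f (p.1, s)) p.2

/-- the determinant `g = 1 − 2∂_uφ∂_ūφ − 2Ψ'(u)∂_ūφ + (Ψ'(u))²(∂_ūφ)²` -/
def gmet (Ψ : ℝ → ℝ) (φ : ℝ × ℝ → ℝ) (p : ℝ × ℝ) : ℝ :=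
  1 - 2 * pd1 φ p * pd2 φ p - 2 * deriv Ψ p.1 * pd2 φ p
    + (deriv Ψ p.1)^2 * (pd2 φ p)^2

/-- the linear-truncation determinant `g̊ = (1 − Ψ'(u)∂_ūφ)²` -/
def gring (Ψ : ℝ → ℝ) (φ : ℝ × ℝ → ℝ) (p : ℝ × ℝ) : ℝ :=
  (1 - deriv Ψ p.1 * pd2 φ p)^2

/-- inverse metric component `g^{uu} = −(∂_ūφ)²/g` -/
def guu (Ψ : ℝ → ℝ) (φ : ℝ × ℝ → ℝ) (p : ℝ × ℝ) : ℝ :=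
  -(pd2 φ p)^2 / gmet Ψ φ p

/-- inverse metric component `g^{uū} = g^{ūu} = (−1 + Ψ'(u)∂_ūφ + ∂_uφ∂_ūφ)/g` -/
def guub (Ψ : ℝ → ℝ) (φ : ℝ × ℝ → ℝ) (p : ℝ × ℝ) : ℝ :=
  (-1 + deriv Ψ p.1 * pd2 φ p + pd1 φ p * pd2 φ p) / gmet Ψ φ p

/-- inverse metric component `g^{ūū} = −(2Ψ'(u) + ∂_uφ)∂_uφ/g` -/
def gubub (Ψ : ℝ → ℝ) (φ : ℝ × ℝ → ℝ) (p : ℝ × ℝ) : ℝ :=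
  -((2 * deriv Ψ p.1 + pd1 φ p) * pd1 φ p) / gmet Ψ φ p

/-- `g^{−1/2}` as a function of the point -/
def invSqrtg (Ψ : ℝ → ℝ) (φ : ℝ × ℝ → ℝ) (p : ℝ × ℝ) : ℝ :=
  (Real.sqrt (gmet Ψ φ p))⁻¹

/-- the Euler–Lagrange expression
`∂_u(∂_ūφ·g^{−1/2}) + ∂_ū((∂_uφ + Ψ'(u) − (Ψ'(u))²∂_ūφ)·g^{−1/2})` -/
def ELexpr (Ψ : ℝ → ℝ) (φ : ℝ × ℝ → ℝ) (p : ℝ × ℝ) : ℝ :=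
  pd1 (fun q => pd2 φ q * invSqrtg Ψ φ q) p
  + pd2 (fun q => (pd1 φ q + deriv Ψ q.1 - (deriv Ψ q.1)^2 * pd2 φ q) * invSqrtg Ψ φ q) p

/-- the Laplace–Beltrami operator `□_g φ` -/
def BoxG (Ψ : ℝ → ℝ) (φ : ℝ × ℝ → ℝ) (p : ℝ × ℝ) : ℝ :=
  invSqrtg Ψ φ p *
    (pd1 (fun q => Real.sqrt (gmet Ψ φ q) * (guu Ψ φ q * pd1 φ q + guub Ψ φ q * pd2 φ q)) p
     + pd2 (fun q => Real.sqrt (gmet Ψ φ q) * (guub Ψ φ q * pd1 φ q + gubub Ψ φ q * pd2 φ q)) p)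

/-- the source term `S₀(∂²φ,∂φ)` of Proposition 2.1 -/
def S0expr (Ψ : ℝ → ℝ) (φ : ℝ × ℝ → ℝ) (p : ℝ × ℝ) : ℝ :=
  (gring Ψ φ p / (gmet Ψ φ p)^2) * (1 - gmet Ψ φ p) * (deriv Ψ p.1)^2 * pd2 (pd2 φ) p
  + (1 / (gmet Ψ φ p)^2) * (gring Ψ φ p - gmet Ψ φ p) * deriv Ψ p.1 * pd1 φ p * pd2 (pd2 φ) p
  - (gring Ψ φ p / (gmet Ψ φ p)^2) * (deriv Ψ p.1)^3 * pd2 φ p * pd2 (pd2 φ) p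
  + (gring Ψ φ p / (gmet Ψ φ p)^2) * deriv Ψ p.1 * pd2 φ p * pd2 (pd1 φ) p
  + (2 * (gring Ψ φ p - 1) / gmet Ψ φ p) * pd1 (pd2 φ) p
  + (1 / gmet Ψ φ p) * deriv Ψ p.1 * pd2 φ p * pd1 (pd2 φ) p
  + (1 / gmet Ψ φ p) * deriv (deriv Ψ) p.1 * (pd2 φ p)^2
  - (gring Ψ φ p / Real.sqrt (gmet Ψ φ p)) * (deriv Ψ p.1)^2 * pd2 φ p
      * pd2 (invSqrtg Ψ φ) p
  + ((gring Ψ φ p - 1) / Real.sqrt (gmet Ψ φ p)) * pd2 φ p * pd1 (invSqrtg Ψ φ) p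
  + ((gring Ψ φ p - 1) / Real.sqrt (gmet Ψ φ p)) * pd1 φ p * pd2 (invSqrtg Ψ φ) p
  + (1 / Real.sqrt (gmet Ψ φ p)) * deriv Ψ p.1 * (pd2 φ p)^2 * pd1 (invSqrtg Ψ φ) p
  - (1 / Real.sqrt (gmet Ψ φ p)) * deriv Ψ p.1 * pd2 φ p * pd1 φ p * pd2 (invSqrtg Ψ φ) p

/-- the alternative source term `S̃₀(∂²φ,∂φ)` of Proposition A.1 -/
def S0tilde (Ψ : ℝ → ℝ) (φ : ℝ × ℝ → ℝ) (p : ℝ × ℝ) : ℝ :=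
  (1 / (gmet Ψ φ p)^2) * (1 - gmet Ψ φ p) * (deriv Ψ p.1)^2 * pd2 (pd2 φ) p
  + (1 / (gmet Ψ φ p)^2) * (1 - gmet Ψ φ p) * deriv Ψ p.1 * pd1 φ p * pd2 (pd2 φ) p
  - (1 / (gmet Ψ φ p)^2) * (deriv Ψ p.1)^3 * pd2 φ p * pd2 (pd2 φ) p
  + (1 / (gmet Ψ φ p)^2) * deriv Ψ p.1 * pd2 φ p * pd2 (pd1 φ) p
  + (1 / gmet Ψ φ p) * deriv Ψ p.1 * pd2 φ p * pd1 (pd2 φ) p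
  - (1 / Real.sqrt (gmet Ψ φ p)) * (deriv Ψ p.1)^2 * pd2 φ p * pd2 (invSqrtg Ψ φ) p
  + (1 / gmet Ψ φ p) * deriv (deriv Ψ) p.1 * (pd2 φ p)^2
  + (1 / Real.sqrt (gmet Ψ φ p)) * deriv Ψ p.1 * (pd2 φ p)^2 * pd1 (invSqrtg Ψ φ) p
  - (1 / Real.sqrt (gmet Ψ φ p)) * deriv Ψ p.1 * pd2 φ p * pd1 φ p * pd2 (invSqrtg Ψ φ) p


lemma curve1 (p : ℝ × ℝ) : HasDerivAt (fun s : ℝ => ((s, p.2) : ℝ × ℝ)) ((1:ℝ), (0:ℝ)) p.1 :=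
  HasDerivAt.prodMk (hasDerivAt_id p.1) (hasDerivAt_const p.1 p.2)

lemma curve2 (p : ℝ × ℝ) : HasDerivAt (fun s : ℝ => ((p.1, s) : ℝ × ℝ)) ((0:ℝ), (1:ℝ)) p.2 :=
  HasDerivAt.prodMk (hasDerivAt_const p.2 p.1) (hasDerivAt_id p.2)

lemma diff_line1 {f : ℝ × ℝ → ℝ} (hf : Differentiable ℝ f) (p : ℝ × ℝ) :
    DifferentiableAt ℝ (fun s => f (s, p.2)) p.1 :=
  (hf (p.1, p.2)).comp p.1 (curve1 p).differentiableAt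

lemma diff_line2 {f : ℝ × ℝ → ℝ} (hf : Differentiable ℝ f) (p : ℝ × ℝ) :
    DifferentiableAt ℝ (fun s => f (p.1, s)) p.2 :=
  (hf (p.1, p.2)).comp p.2 (curve2 p).differentiableAt

lemma pd1_eq {f : ℝ × ℝ → ℝ} {p : ℝ × ℝ} (hf : DifferentiableAt ℝ f p) :
    pd1 f p = fderiv ℝ f p (1, 0) := by
  have h := hf.hasFDerivAt.comp_hasDerivAt p.1 (curve1 p)
  exact h.deriv

lemma pd2_eq {f : ℝ × ℝ → ℝ} {p : ℝ × ℝ} (hf : DifferentiableAt ℝ f p) :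
    pd2 f p = fderiv ℝ f p (0, 1) := by
  have h := hf.hasFDerivAt.comp_hasDerivAt p.2 (curve2 p)
  exact h.deriv

lemma contDiff_pd1 {f : ℝ × ℝ → ℝ} (hf : ContDiff ℝ (⊤ : ℕ∞) f) :
    ContDiff ℝ (⊤ : ℕ∞) (pd1 f) := by
  have : pd1 f = fun p => fderiv ℝ f p (1, 0) :=
    funext fun p => pd1_eq (hf.differentiable (by simp) p)
  rw [this]
  exact (hf.fderiv_right (by exact_mod_cast le_top)).clm_apply contDiff_const

lemma contDiff_pd2 {f : ℝ × ℝ → ℝ} (hf : ContDiff ℝ (⊤ : ℕ∞) f) :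
    ContDiff ℝ (⊤ : ℕ∞) (pd2 f) := by
  have : pd2 f = fun p => fderiv ℝ f p (0, 1) :=
    funext fun p => pd2_eq (hf.differentiable (by simp) p)
  rw [this]
  exact (hf.fderiv_right (by exact_mod_cast le_top)).clm_apply contDiff_const

lemma pd_comm {f : ℝ × ℝ → ℝ} (hf : ContDiff ℝ (⊤ : ℕ∞) f) (p : ℝ × ℝ) :
    pd2 (pd1 f) p = pd1 (pd2 f) p := by
  have hf' : Differentiable ℝ f := hf.differentiable (by simp)
  have hfd : Differentiable ℝ (fderiv ℝ f) :=
    (hf.fderiv_right (m := (⊤:ℕ∞)) (by exact_mod_cast le_top)).differentiable (by simp)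
  have hsymm : IsSymmSndFDerivAt ℝ f p :=
    hf.contDiffAt.isSymmSndFDerivAt (by simp only [minSmoothness_of_isRCLikeNormedField]; exact WithTop.coe_le_coe.mpr (le_top : (2:ℕ∞) ≤ ⊤))
  have e1 : pd1 f = fun q => fderiv ℝ f q (1, 0) :=
    funext fun q => pd1_eq (hf' q)
  have e2 : pd2 f = fun q => fderiv ℝ f q (0, 1) :=
    funext fun q => pd2_eq (hf' q)
  have d1 : DifferentiableAt ℝ (fun q => fderiv ℝ f q ((1:ℝ), (0:ℝ))) p :=
    (hfd p).clm_apply (differentiableAt_const _)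
  have d2 : DifferentiableAt ℝ (fun q => fderiv ℝ f q ((0:ℝ), (1:ℝ))) p :=
    (hfd p).clm_apply (differentiableAt_const _)
  rw [e1, e2, pd2_eq d1, pd1_eq d2,
    fderiv_clm_apply (hfd p) (differentiableAt_const _),
    fderiv_clm_apply (hfd p) (differentiableAt_const _)]
  simp [hsymm.eq (0,1) (1,0)]


section MainProof

variable {Ψ : ℝ → ℝ} {φ : ℝ × ℝ → ℝ}

set_option maxHeartbeats 2000000 in
lemma key_identity (hΨ : ContDiff ℝ (⊤ : ℕ∞) Ψ) (hφ : ContDiff ℝ (⊤ : ℕ∞) φ)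
    (hg : ∀ p : ℝ × ℝ, 0 < gmet Ψ φ p) (p : ℝ × ℝ) :
    S0tilde Ψ φ p - S0expr Ψ φ p
      = -((gring Ψ φ p - 1) / Real.sqrt (gmet Ψ φ p)) * ELexpr Ψ φ p := by
  have hp1 : Differentiable ℝ (pd1 φ) :=
    (contDiff_pd1 hφ).differentiable (by simp)
  have hp2 : Differentiable ℝ (pd2 φ) :=
    (contDiff_pd2 hφ).differentiable (by simp)
  have hdΨ : Differentiable ℝ (deriv Ψ) :=
    ((contDiff_infty_iff_deriv.mp hΨ).2).differentiable (by simp)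
  have hgm : Differentiable ℝ (gmet Ψ φ) := by
    unfold gmet
    exact ((differentiable_const 1).sub ((hp1.const_mul 2).mul hp2)).sub
        (((hdΨ.comp differentiable_fst).const_mul 2).mul hp2) |>.add
        (((hdΨ.comp differentiable_fst).pow 2).mul (hp2.pow 2))
  have hsne : ∀ q, Real.sqrt (gmet Ψ φ q) ≠ 0 := fun q => (Real.sqrt_pos.mpr (hg q)).ne'
  have hinv : Differentiable ℝ (invSqrtg Ψ φ) :=
    fun q => ((hgm q).sqrt (hg q).ne').inv (hsne q)
  -- line derivatives
  have hCl : HasDerivAt (fun t => pd1 φ (p.1, t)) (pd2 (pd1 φ) p) p.2 :=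
    (diff_line2 hp1 p).hasDerivAt
  have hDl : HasDerivAt (fun t => pd2 φ (p.1, t)) (pd2 (pd2 φ) p) p.2 :=
    (diff_line2 hp2 p).hasDerivAt
  have hFl : HasDerivAt (fun t => pd2 φ (t, p.2)) (pd1 (pd2 φ) p) p.1 :=
    (diff_line1 hp2 p).hasDerivAt
  have hH1 : HasDerivAt (fun t => invSqrtg Ψ φ (t, p.2)) (pd1 (invSqrtg Ψ φ) p) p.1 :=
    (diff_line1 hinv p).hasDerivAt
  -- derivative of gmet along the second direction
  have hgd : HasDerivAt (fun t => gmet Ψ φ (p.1, t))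
      (-(2 * pd2 (pd1 φ) p * pd2 φ p) - 2 * pd1 φ p * pd2 (pd2 φ) p
        - 2 * deriv Ψ p.1 * pd2 (pd2 φ) p
        + 2 * (deriv Ψ p.1)^2 * pd2 φ p * pd2 (pd2 φ) p) p.2 := by
    have h0 : HasDerivAt (fun t => gmet Ψ φ (p.1, t))
        ((0 : ℝ) - (2 * pd2 (pd1 φ) p * pd2 φ p + 2 * pd1 φ p * pd2 (pd2 φ) p)
          - 2 * deriv Ψ p.1 * pd2 (pd2 φ) p
          + (deriv Ψ p.1)^2 * (((2 : ℕ) : ℝ) * pd2 φ p ^ (2 - 1) * pd2 (pd2 φ) p)) p.2 :=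
      (((hasDerivAt_const p.2 (1:ℝ)).sub ((hCl.const_mul 2).mul hDl)).sub
        (hDl.const_mul (2 * deriv Ψ p.1))).add ((hDl.pow 2).const_mul ((deriv Ψ p.1)^2))
    have e : (0 : ℝ) - (2 * pd2 (pd1 φ) p * pd2 φ p + 2 * pd1 φ p * pd2 (pd2 φ) p)
          - 2 * deriv Ψ p.1 * pd2 (pd2 φ) p
          + (deriv Ψ p.1)^2 * (((2 : ℕ) : ℝ) * pd2 φ p ^ (2 - 1) * pd2 (pd2 φ) p)
        = -(2 * pd2 (pd1 φ) p * pd2 φ p) - 2 * pd1 φ p * pd2 (pd2 φ) p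
          - 2 * deriv Ψ p.1 * pd2 (pd2 φ) p
          + 2 * (deriv Ψ p.1)^2 * pd2 φ p * pd2 (pd2 φ) p := by
      push_cast
      ring
    exact e ▸ h0
  have hsq : HasDerivAt (fun t => Real.sqrt (gmet Ψ φ (p.1, t)))
      ((-(2 * pd2 (pd1 φ) p * pd2 φ p) - 2 * pd1 φ p * pd2 (pd2 φ) p
        - 2 * deriv Ψ p.1 * pd2 (pd2 φ) p
        + 2 * (deriv Ψ p.1)^2 * pd2 φ p * pd2 (pd2 φ) p)
        / (2 * Real.sqrt (gmet Ψ φ p))) p.2 := hgd.sqrt (hg p).ne'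
  have hisq : HasDerivAt (fun t => (Real.sqrt (gmet Ψ φ (p.1, t)))⁻¹)
      (-((-(2 * pd2 (pd1 φ) p * pd2 φ p) - 2 * pd1 φ p * pd2 (pd2 φ) p
        - 2 * deriv Ψ p.1 * pd2 (pd2 φ) p
        + 2 * (deriv Ψ p.1)^2 * pd2 φ p * pd2 (pd2 φ) p)
        / (2 * Real.sqrt (gmet Ψ φ p))) / Real.sqrt (gmet Ψ φ p) ^ 2) p.2 :=
    hsq.inv (hsne p)
  have hP2 : pd2 (invSqrtg Ψ φ) p
      = -((-(2 * pd2 (pd1 φ) p * pd2 φ p) - 2 * pd1 φ p * pd2 (pd2 φ) p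
        - 2 * deriv Ψ p.1 * pd2 (pd2 φ) p
        + 2 * (deriv Ψ p.1)^2 * pd2 φ p * pd2 (pd2 φ) p)
        / (2 * Real.sqrt (gmet Ψ φ p))) / Real.sqrt (gmet Ψ φ p) ^ 2 := hisq.deriv
  have hEL1 : pd1 (fun q => pd2 φ q * invSqrtg Ψ φ q) p
      = pd1 (pd2 φ) p * invSqrtg Ψ φ p + pd2 φ p * pd1 (invSqrtg Ψ φ) p :=
    (hFl.mul hH1).deriv
  have hEL2 : pd2 (fun q => (pd1 φ q + deriv Ψ q.1 - (deriv Ψ q.1)^2 * pd2 φ q)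
        * invSqrtg Ψ φ q) p
      = (pd2 (pd1 φ) p - (deriv Ψ p.1)^2 * pd2 (pd2 φ) p) * invSqrtg Ψ φ p
        + (pd1 φ p + deriv Ψ p.1 - (deriv Ψ p.1)^2 * pd2 φ p)
          * (-((-(2 * pd2 (pd1 φ) p * pd2 φ p) - 2 * pd1 φ p * pd2 (pd2 φ) p
            - 2 * deriv Ψ p.1 * pd2 (pd2 φ) p
            + 2 * (deriv Ψ p.1)^2 * pd2 φ p * pd2 (pd2 φ) p)
            / (2 * Real.sqrt (gmet Ψ φ p))) / Real.sqrt (gmet Ψ φ p) ^ 2) :=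
    (((hCl.add_const (deriv Ψ p.1)).sub (hDl.const_mul ((deriv Ψ p.1)^2))).mul hisq).deriv
  have hEF : pd2 (pd1 φ) p = pd1 (pd2 φ) p := pd_comm hφ p
  simp only [S0tilde, S0expr, ELexpr, gring]
  rw [hEL1, hEL2, hP2, hEF]
  rw [show invSqrtg Ψ φ p = (Real.sqrt (gmet Ψ φ p))⁻¹ from rfl]
  have hgpos := hg p
  have hs0 := hsne p
  generalize hsq' : Real.sqrt (gmet Ψ φ p) = s at *
  have hgm2 : gmet Ψ φ p = s ^ 2 := by
    rw [← hsq']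
    exact (Real.sq_sqrt (hg p).le).symm
  rw [hgm2]
  field_simp
  ring

end MainProof

/-- **Equivalence of the two source terms (Remark A.2).**
For smooth `φ` with `g > 0` and `g̊ > 0` everywhere, the unconditional pointwise identity
`S̃₀ − S₀ = −((g̊−1)/√g)·[∂_u(∂_ūφ·g^{−1/2}) + ∂_ū((∂_uφ + Ψ'(u) − (Ψ'(u))²∂_ūφ)·g^{−1/2})]`
holds; in particular `S̃₀ = S₀` at every point whenever `φ` satisfies the
Euler–Lagrange equation. -/
theorem source_terms_equivalent
    (Ψ : ℝ → ℝ) (φ : ℝ × ℝ → ℝ)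
    (hΨ : ContDiff ℝ (⊤ : ℕ∞) Ψ) (hφ : ContDiff ℝ (⊤ : ℕ∞) φ)
    (hg : ∀ p : ℝ × ℝ, 0 < gmet Ψ φ p) (hgr : ∀ p : ℝ × ℝ, 0 < gring Ψ φ p) :
    (∀ p : ℝ × ℝ,
      S0tilde Ψ φ p - S0expr Ψ φ p
        = -((gring Ψ φ p - 1) / Real.sqrt (gmet Ψ φ p)) * ELexpr Ψ φ p) ∧
    ((∀ p : ℝ × ℝ, ELexpr Ψ φ p = 0) → ∀ p : ℝ × ℝ, S0tilde Ψ φ p = S0expr Ψ φ p) := by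
  refine ⟨key_identity hΨ hφ hg, fun hEL p => ?_⟩
  have h := key_identity hΨ hφ hg p
  rw [hEL p, mul_zero] at h
  linarith
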